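/- Every free abelian group is transitive: if G is a free abelian group and x, y are pure elements of G (nonzero elements g such that g = n·h implies n = ±1 for g, h in G, n an integer), then there exists an automorphism φ of G with φ(x) = y. -/

import Mathlib

/-- A pure element of an abelian group: nonzero, and any representation `x = n • h`
forces `n = ± 1`. -/
def IsPureElt {G : Type*} [AddCommGroup G] (x : G) : Prop :=
  x ≠ 0 ∧ ∀ (n : ℤ) (h : G), x = n • h → n = 1 ∨ n = -1

lemma exists_dual {G : Type*} [AddCommGroup G] {ι : Type*} [Fintype ι]
    (b : Module.Basis ι ℤ G) (x : G) (hx : IsPureElt x) : ∃ f : G →ₗ[ℤ] ℤ, f x = 1 := by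
  classical
  set c : ι → ℤ := fun i => b.repr x i with hc
  have hspan : Ideal.span (Set.range c) = ⊤ := by
    obtain ⟨d, hd⟩ := (IsPrincipalIdealRing.principal (Ideal.span (Set.range c))).principal
    have hdvd : ∀ i, d ∣ c i := by
      intro i
      have : c i ∈ Ideal.span (Set.range c) := Ideal.subset_span ⟨i, rfl⟩
      rw [hd, Submodule.mem_span_singleton] at this
      obtain ⟨a, ha⟩ := this
      exact ⟨a, by rw [← ha, smul_eq_mul, mul_comm]⟩
    have hxd : x = d • (∑ i, (c i / d) • b i) := by
      have : d • (∑ i, (c i / d) • b i) = ∑ i, c i • b i := by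
        rw [Finset.smul_sum]
        refine Finset.sum_congr rfl fun i _ => ?_
        rw [smul_smul, Int.mul_ediv_cancel' (hdvd i)]
      rw [this]
      exact (b.sum_repr x).symm
    rcases hx.2 d _ hxd with h1 | h1 <;>
      rw [hd, h1] <;> simp [Ideal.span_singleton_eq_top]
  have h1 : (1 : ℤ) ∈ Ideal.span (Set.range c) := hspan ▸ Submodule.mem_top
  rw [Ideal.span, Submodule.mem_span_range_iff_exists_fun] at h1
  obtain ⟨u, hu⟩ := h1
  refine ⟨∑ i, u i • b.coord i, ?_⟩
  simpa [smul_eq_mul] using hu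

noncomputable def splitEquiv {G : Type*} [AddCommGroup G] (f : G →ₗ[ℤ] ℤ) (x : G)
    (hfx : f x = 1) : G ≃ₗ[ℤ] ℤ × (LinearMap.ker f) :=
  LinearEquiv.ofLinear
    (LinearMap.prod f (LinearMap.codRestrict (LinearMap.ker f)
      (LinearMap.id - (f.smulRight x)) (by intro z; rw [LinearMap.mem_ker]; simp [hfx, mul_comm])))
    ((LinearMap.toSpanSingleton ℤ G x).comp (LinearMap.fst ℤ ℤ (LinearMap.ker f)) +
      (LinearMap.ker f).subtype.comp (LinearMap.snd ℤ ℤ (LinearMap.ker f)))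
    (by
      apply LinearMap.ext
      rintro ⟨n, k, hk⟩
      rw [LinearMap.mem_ker] at hk
      apply Prod.ext
      · simp [LinearMap.toSpanSingleton, hfx, hk, mul_comm]
      · ext
        simp [LinearMap.toSpanSingleton, hfx, hk, mul_comm])
    (by
      ext z
      simp [LinearMap.toSpanSingleton])

lemma splitEquiv_apply_self {G : Type*} [AddCommGroup G] (f : G →ₗ[ℤ] ℤ) (x : G)
    (hfx : f x = 1) : splitEquiv f x hfx x = (1, 0) := by
  apply Prod.ext
  · simpa [splitEquiv] using hfx
  · ext
    simp [splitEquiv, hfx]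

lemma finite_case {G : Type*} [AddCommGroup G] {ι : Type*} [Fintype ι] (b : Module.Basis ι ℤ G)
    (x y : G) (hx : IsPureElt x) (hy : IsPureElt y) : ∃ φ : G ≃ₗ[ℤ] G, φ x = y := by
  obtain ⟨f, hf⟩ := exists_dual b x hx
  obtain ⟨g, hg⟩ := exists_dual b y hy
  haveI : Module.Finite ℤ G := Module.Finite.of_basis b
  haveI : Module.Free ℤ G := Module.Free.of_basis b
  haveI : Module.IsTorsionFree ℤ G := inferInstance
  haveI : IsNoetherian ℤ G := inferInstance
  set K := LinearMap.ker f with hK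
  set L := LinearMap.ker g with hL
  haveI : Module.Finite ℤ K := inferInstance
  haveI : Module.Finite ℤ L := inferInstance
  haveI : Module.Free ℤ K := Module.free_of_finite_type_torsion_free'
  haveI : Module.Free ℤ L := Module.free_of_finite_type_torsion_free'
  have hrk : Module.finrank ℤ K = Module.finrank ℤ L := by
    have h1 : Module.finrank ℤ G = 1 + Module.finrank ℤ K := by
      rw [(splitEquiv f x hf).finrank_eq, Module.finrank_prod, Module.finrank_self]
    have h2 : Module.finrank ℤ G = 1 + Module.finrank ℤ L := by
      rw [(splitEquiv g y hg).finrank_eq, Module.finrank_prod, Module.finrank_self]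
    omega
  let bK := Module.Free.chooseBasis ℤ K
  let bL := Module.Free.chooseBasis ℤ L
  have hcard : Fintype.card (Module.Free.ChooseBasisIndex ℤ K) =
      Fintype.card (Module.Free.ChooseBasisIndex ℤ L) := by
    rw [← Module.finrank_eq_card_chooseBasisIndex, ← Module.finrank_eq_card_chooseBasisIndex,
      hrk]
  let eKL : K ≃ₗ[ℤ] L := bK.equiv bL (Fintype.equivOfCardEq hcard)
  refine ⟨((splitEquiv f x hf).trans ((LinearEquiv.refl ℤ ℤ).prodCongr eKL)).trans
    (splitEquiv g y hg).symm, ?_⟩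
  have h0 : ((LinearEquiv.refl ℤ ℤ).prodCongr eKL) (1, 0) = (1, 0) := by
    simp
  rw [LinearEquiv.trans_apply, LinearEquiv.trans_apply, splitEquiv_apply_self, h0,
    LinearEquiv.symm_apply_eq, splitEquiv_apply_self]

lemma IsPureElt.mapEquiv {G H : Type*} [AddCommGroup G] [AddCommGroup H]
    (E : G ≃ₗ[ℤ] H) {x : G} (hx : IsPureElt x) : IsPureElt (E x) := by
  refine ⟨fun h0 => hx.1 (by simpa using congrArg E.symm h0), fun n h hn => ?_⟩
  refine hx.2 n (E.symm h) ?_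
  calc x = E.symm (E x) := (E.symm_apply_apply x).symm
    _ = E.symm (n • h) := by rw [hn]
    _ = n • E.symm h := E.symm.map_smul n h

lemma IsPureElt.fst_of_pair {A B : Type*} [AddCommGroup A] [AddCommGroup B]
    {a : A} (h : IsPureElt (Prod.mk a (0 : B))) : IsPureElt a := by
  refine ⟨fun h0 => h.1 (by rw [h0]; rfl), fun n k hn => ?_⟩
  refine h.2 n (k, 0) ?_
  have h1 : (n • ((k, (0 : B)) : A × B)) = ((n • k : A), (n • (0 : B) : B)) := rfl
  rw [h1, hn, smul_zero]

/-- Every free abelian group is transitive: any pure element can be mapped to any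
other pure element by an automorphism. -/
theorem free_abelian_transitive {G : Type*} [AddCommGroup G] [Module.Free ℤ G]
    (x y : G) (hx : IsPureElt x) (hy : IsPureElt y) :
    ∃ φ : G ≃+ G, φ x = y := by
  classical
  let b := Module.Free.chooseBasis ℤ G
  set ι := Module.Free.ChooseBasisIndex ℤ G
  set S : Finset ι := (b.repr x).support ∪ (b.repr y).support with hS
  let e : {i // i ∈ S} ⊕ {i // i ∉ S} ≃ ι := Equiv.sumCompl (· ∈ S)
  let E : G ≃ₗ[ℤ] ({i // i ∈ S} →₀ ℤ) × ({i // i ∉ S} →₀ ℤ) :=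
    b.repr.trans ((Finsupp.domLCongr e.symm).trans (Finsupp.sumFinsuppLEquivProdFinsupp ℤ))
  have hsnd : ∀ z : G, (b.repr z).support ⊆ S → (E z).2 = 0 := by
    intro z hz
    ext j
    simp only [E, LinearEquiv.trans_apply, Finsupp.coe_zero, Pi.zero_apply]
    rw [Finsupp.snd_sumFinsuppLEquivProdFinsupp]
    simp only [Finsupp.domLCongr_apply, Finsupp.domCongr_apply, Finsupp.equivMapDomain_apply,
      Equiv.symm_symm]
    have he : e (Sum.inr j) = (j : ι) := rfl
    rw [he]
    exact Finsupp.notMem_support_iff.mp (fun hmem => j.2 (hz hmem))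
  have hEx : E x = ((E x).1, 0) := by
    rw [← hsnd x Finset.subset_union_left]
  have hEy : E y = ((E y).1, 0) := by
    rw [← hsnd y Finset.subset_union_right]
  have hx' : IsPureElt (E x).1 := by
    have h := hx.mapEquiv E
    rw [hEx] at h
    exact h.fst_of_pair
  have hy' : IsPureElt (E y).1 := by
    have h := hy.mapEquiv E
    rw [hEy] at h
    exact h.fst_of_pair
  obtain ⟨ψ, hψ⟩ := finite_case (Finsupp.basisSingleOne (R := ℤ) (ι := {i // i ∈ S}))
    (E x).1 (E y).1 hx' hy'
  refine ⟨((E.trans (ψ.prodCongr (LinearEquiv.refl ℤ _))).trans E.symm).toAddEquiv, ?_⟩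
  show ((E.trans (ψ.prodCongr (LinearEquiv.refl ℤ _))).trans E.symm) x = y
  rw [LinearEquiv.trans_apply, LinearEquiv.trans_apply, hEx, LinearEquiv.symm_apply_eq, hEy]
  simp [hψ]
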